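/- Let w₁,…,wₙ be i.i.d. N(0,σ²) random variables and a₁,…,aₙ real constants. Define X = ∑ᵢ wᵢ 1_{wᵢ > aᵢ} − (σ/√(2π)) ∑ᵢ e^{−aᵢ²/(2σ²)}. Then E[e^{λX}] ≤ e^{nλ²σ²/2} for all λ > 0. -/

import Mathlib

open MeasureTheory ProbabilityTheory Real Filter Set
open scoped ENNReal NNReal Topology

section AuxReal
variable {σ : ℝ}

private lemma vv_ne (hσ : 0 < σ) : Real.toNNReal (σ^2) ≠ 0 := by
  rw [Ne, Real.toNNReal_eq_zero, not_le]; positivity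

private lemma conv_integral (hσ : 0 < σ) (g : ℝ → ℝ) :
    ∫ x, g x ∂(gaussianReal 0 (Real.toNNReal (σ^2)))
      = ∫ x, gaussianPDFReal 0 (Real.toNNReal (σ^2)) x * g x := by
  rw [gaussianReal_of_var_ne_zero 0 (vv_ne hσ)]
  rw [show gaussianPDF 0 (Real.toNNReal (σ^2))
      = (fun x => ((fun y => (gaussianPDFReal 0 (Real.toNNReal (σ^2)) y).toNNReal) x : ℝ≥0∞))
      from rfl]
  rw [integral_withDensity_eq_integral_smul
    ((measurable_gaussianPDFReal 0 (Real.toNNReal (σ^2))).real_toNNReal) g]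
  congr 1
  ext x
  rw [NNReal.smul_def, Real.coe_toNNReal _ (gaussianPDFReal_nonneg _ _ _), smul_eq_mul]

private lemma phi_eq (hσ : 0 < σ) :
    gaussianPDFReal 0 (Real.toNNReal (σ^2))
      = fun x => (Real.sqrt (2 * π * σ^2))⁻¹ * rexp (-x^2/(2*σ^2)) := by
  funext x
  rw [gaussianPDFReal, Real.coe_toNNReal _ (sq_nonneg σ), sub_zero]

private lemma pdf_mul_exp (hσ : 0 < σ) (t x : ℝ) :
    gaussianPDFReal 0 (Real.toNNReal (σ^2)) x * rexp (t*x)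
      = rexp (t^2*σ^2/2) * gaussianPDFReal (t*σ^2) (Real.toNNReal (σ^2)) x := by
  rw [phi_eq hσ, gaussianPDFReal, Real.coe_toNNReal _ (sq_nonneg σ)]
  have h2 : (2:ℝ)*σ^2 ≠ 0 := by positivity
  rw [mul_assoc, ← Real.exp_add, mul_left_comm, ← Real.exp_add]
  congr 1
  field_simp
  ring

private lemma int_exp_pdf (hσ : 0 < σ) (t : ℝ) :
    Integrable (fun x => gaussianPDFReal 0 (Real.toNNReal (σ^2)) x * rexp (t*x)) := by
  simp_rw [pdf_mul_exp hσ t]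
  exact (integrable_gaussianPDFReal _ _).const_mul _

private lemma integral_exp_pdf (hσ : 0 < σ) (t : ℝ) :
    ∫ x, gaussianPDFReal 0 (Real.toNNReal (σ^2)) x * rexp (t*x) = rexp (t^2*σ^2/2) := by
  simp_rw [pdf_mul_exp hσ t]
  rw [integral_const_mul, integral_gaussianPDFReal_eq_one _ (vv_ne hσ), mul_one]

private lemma int_x_pdf (hσ : 0 < σ) :
    Integrable (fun x => gaussianPDFReal 0 (Real.toNNReal (σ^2)) x * x) := by
  rw [phi_eq hσ]
  have hb : (0:ℝ) < (2*σ^2)⁻¹ := by positivity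
  have h := (integrable_mul_exp_neg_mul_sq hb).const_mul (Real.sqrt (2 * π * σ^2))⁻¹
  refine h.congr (Filter.Eventually.of_forall fun x => ?_)
  show (Real.sqrt (2 * π * σ^2))⁻¹ * (x * rexp (-(2 * σ^2)⁻¹ * x^2))
      = (Real.sqrt (2 * π * σ^2))⁻¹ * rexp (-x^2/(2*σ^2)) * x
  rw [show -(2 * σ^2)⁻¹ * x^2 = -x^2/(2*σ^2) by ring]
  ring

private lemma integral_Iic_x_pdf (hσ : 0 < σ) (A : ℝ) :
    ∫ x in Iic A, gaussianPDFReal 0 (Real.toNNReal (σ^2)) x * x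
      = -(σ / Real.sqrt (2*π) * rexp (-A^2/(2*σ^2))) := by
  have hs2 : (0:ℝ) < σ^2 := by positivity
  set c : ℝ := (Real.sqrt (2 * π * σ^2))⁻¹ with hc
  set F : ℝ → ℝ := fun x => (-σ^2 * c) * rexp (-x^2/(2*σ^2)) with hF
  have hderiv : ∀ x ∈ Iic A, HasDerivAt F
      (gaussianPDFReal 0 (Real.toNNReal (σ^2)) x * x) x := by
    intro x _
    have h1 : HasDerivAt (fun y : ℝ => -y^2/(2*σ^2)) (-(2*x^1)/(2*σ^2)) x :=
      ((hasDerivAt_pow 2 x).neg).div_const (2*σ^2)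
    have h2 := (h1.exp).const_mul (-σ^2 * c)
    have h3 : (-σ^2 * c) * (rexp (-x^2/(2*σ^2)) * (-(2*x^1)/(2*σ^2)))
        = gaussianPDFReal 0 (Real.toNNReal (σ^2)) x * x := by
      rw [phi_eq hσ]
      show (-σ^2 * c) * (rexp (-x^2/(2*σ^2)) * (-(2*x^1)/(2*σ^2)))
        = c * rexp (-x^2/(2*σ^2)) * x
      field_simp
    rw [h3] at h2
    exact h2
  have htend : Tendsto F atBot (𝓝 0) := by
    have t0 : Tendsto (fun y : ℝ => y^2) atBot atTop := by
      have := (tendsto_pow_atTop (by norm_num : (2:ℕ) ≠ 0)).comp (tendsto_neg_atBot_atTop (G := ℝ))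
      simpa only [Function.comp_def, neg_sq] using this
    have t1 : Tendsto (fun y : ℝ => -y^2/(2*σ^2)) atBot atBot := by
      have := tendsto_neg_atTop_atBot.comp (t0.atTop_div_const (by positivity : (0:ℝ) < 2*σ^2))
      simpa only [Function.comp_def, neg_div] using this
    have t2 := (Real.tendsto_exp_atBot).comp t1
    have t3 := t2.const_mul (-σ^2 * c)
    rw [mul_zero] at t3
    exact t3
  have hint : IntegrableOn (fun x => gaussianPDFReal 0 (Real.toNNReal (σ^2)) x * x) (Iic A) :=
    (int_x_pdf hσ).integrableOn
  rw [integral_Iic_of_hasDerivAt_of_tendsto' hderiv hint htend]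
  have hsqrt : Real.sqrt (2 * π * σ^2) = Real.sqrt (2*π) * σ := by
    rw [Real.sqrt_mul (by positivity), Real.sqrt_sq hσ.le]
  have hpos : (0:ℝ) < Real.sqrt (2*π) := Real.sqrt_pos.2 (by positivity)
  rw [sub_zero, hF, hc, hsqrt]
  field_simp

private lemma key_bound (hσ : 0 < σ) {l : ℝ} (hl : 0 < l) (A : ℝ) :
    ∫ x, rexp (l * (x * Set.indicator (Set.Ioi A) (fun _ => (1:ℝ)) x
        - σ / Real.sqrt (2 * π) * rexp (-A^2/(2*σ^2)))) ∂(gaussianReal 0 (Real.toNNReal (σ^2)))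
      ≤ rexp (l^2*σ^2/2) := by
  set φ : ℝ → ℝ := gaussianPDFReal 0 (Real.toNNReal (σ^2)) with hφ
  set μA : ℝ := σ / Real.sqrt (2 * π) * rexp (-A^2/(2*σ^2)) with hμA
  have hφ0 : ∀ x, 0 ≤ φ x := fun x => gaussianPDFReal_nonneg _ _ _
  have hμA0 : 0 ≤ μA := by
    rw [hμA]; positivity
  rw [conv_integral hσ]
  have hsplit : ∀ x : ℝ, φ x * rexp (l * (x * Set.indicator (Set.Ioi A) (fun _ => (1:ℝ)) x - μA))
      = φ x * rexp (l * (x * Set.indicator (Set.Ioi A) (fun _ => (1:ℝ)) x)) * rexp (-(l*μA)) := by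
    intro x
    rw [mul_assoc, ← Real.exp_add]
    ring_nf
  simp only [← hφ, ← hμA]
  simp_rw [hsplit]
  rw [integral_mul_const]
  have hmono : ∫ x, φ x * rexp (l * (x * Set.indicator (Set.Ioi A) (fun _ => (1:ℝ)) x))
      ≤ rexp (l^2*σ^2/2) + l * μA := by
    have hintg : Integrable (fun x => φ x * rexp (l*x)
        - l * Set.indicator (Set.Iic A) (fun y => φ y * y) x) := by
      exact (int_exp_pdf hσ l).sub (((int_x_pdf hσ).indicator measurableSet_Iic).const_mul l)
    have hle : ∀ x, φ x * rexp (l * (x * Set.indicator (Set.Ioi A) (fun _ => (1:ℝ)) x))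
        ≤ φ x * rexp (l*x) - l * Set.indicator (Set.Iic A) (fun y => φ y * y) x := by
      intro x
      by_cases hx : x ∈ Set.Ioi A
      · rw [Set.indicator_of_mem hx, Set.indicator_of_notMem (by simpa using hx : x ∉ Set.Iic A)]
        rw [mul_one, mul_zero, sub_zero]
      · rw [Set.indicator_of_notMem hx, Set.indicator_of_mem (by simpa using hx : x ∈ Set.Iic A)]
        rw [mul_zero, mul_zero, Real.exp_zero, mul_one]
        have h1 : 1 + l * x ≤ rexp (l * x) := by
          have := Real.add_one_le_exp (l*x)
          linarith
        calc φ x = φ x * 1 := by ring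
        _ ≤ φ x * (rexp (l*x) - l*x) := by
            apply mul_le_mul_of_nonneg_left _ (hφ0 x)
            linarith
        _ = φ x * rexp (l*x) - l * (φ x * x) := by ring
    calc ∫ x, φ x * rexp (l * (x * Set.indicator (Set.Ioi A) (fun _ => (1:ℝ)) x))
        ≤ ∫ x, (φ x * rexp (l*x) - l * Set.indicator (Set.Iic A) (fun y => φ y * y) x) := by
          refine integral_mono_of_nonneg (Filter.Eventually.of_forall fun x => ?_) hintg
            (Filter.Eventually.of_forall hle)
          exact mul_nonneg (hφ0 x) (Real.exp_nonneg _)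
      _ = (∫ x, φ x * rexp (l*x)) - l * ∫ x in Set.Iic A, φ x * x := by
          rw [integral_sub (int_exp_pdf hσ l)
            (((int_x_pdf hσ).indicator measurableSet_Iic).const_mul l)]
          rw [integral_const_mul, integral_indicator measurableSet_Iic]
      _ = rexp (l^2*σ^2/2) + l * μA := by
          rw [integral_exp_pdf hσ l, integral_Iic_x_pdf hσ A]
          ring
  have hpos : 0 < rexp (-(l*μA)) := Real.exp_pos _
  calc (∫ x, φ x * rexp (l * (x * Set.indicator (Set.Ioi A) (fun _ => (1:ℝ)) x))) * rexp (-(l*μA))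
      ≤ (rexp (l^2*σ^2/2) + l * μA) * rexp (-(l*μA)) := by
        apply mul_le_mul_of_nonneg_right hmono hpos.le
    _ ≤ rexp (l^2*σ^2/2) := by
        rw [Real.exp_neg, mul_inv_le_iff₀ (Real.exp_pos _)]
        have h1 : 1 + l * μA ≤ rexp (l * μA) := by
          have := Real.add_one_le_exp (l*μA); linarith
        have h2 : (1:ℝ) ≤ rexp (l^2*σ^2/2) := Real.one_le_exp (by positivity)
        have h3 : 0 ≤ l * μA := mul_nonneg hl.le hμA0
        nlinarith [mul_le_mul_of_nonneg_left h1 (le_trans zero_le_one h2)]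

end AuxReal

private lemma iIndepFun_ae_congr {Ω ι : Type*} {mΩ : MeasurableSpace Ω} {μ : Measure Ω}
    {f g : ι → Ω → ℝ} (h : ∀ i, f i =ᵐ[μ] g i)
    (hf : iIndepFun f μ) :
    iIndepFun g μ := by
  rw [iIndepFun_iff_measure_inter_preimage_eq_mul] at hf ⊢
  intro S sets hsets
  have hae : ∀ᵐ x ∂μ, ∀ i ∈ (S : Set ι), f i x = g i x := by
    rw [ae_ball_iff S.countable_toSet]
    exact fun i _ => h i
  have h1 : μ (⋂ i ∈ S, g i ⁻¹' sets i) = μ (⋂ i ∈ S, f i ⁻¹' sets i) := by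
    apply measure_congr
    filter_upwards [hae] with x hx
    have : (x ∈ ⋂ i ∈ S, g i ⁻¹' sets i) ↔ (x ∈ ⋂ i ∈ S, f i ⁻¹' sets i) := by
      simp only [Set.mem_iInter, Set.mem_preimage]
      exact ⟨fun H i hi => (hx i (Finset.mem_coe.2 hi)) ▸ H i hi,
        fun H i hi => (hx i (Finset.mem_coe.2 hi)).symm ▸ H i hi⟩
    exact eq_iff_iff.2 this
  rw [h1, hf S hsets]
  refine Finset.prod_congr rfl fun i hi => ?_
  apply measure_congr
  filter_upwards [h i] with x hx
  refine eq_iff_iff.2 ?_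
  show f i x ∈ sets i ↔ g i x ∈ sets i
  rw [hx]

theorem stmt_7 {Ω : Type*} [MeasureSpace Ω] [IsProbabilityMeasure (ℙ : Measure Ω)]
    (n : ℕ) (σ : ℝ) (hσ : 0 < σ) (w : Fin n → Ω → ℝ) (a : Fin n → ℝ)
    (hindep : iIndepFun w ℙ)
    (hdist : ∀ i, Measure.map (w i) ℙ = gaussianReal 0 (Real.toNNReal (σ ^ 2)))
    (l : ℝ) (hl : 0 < l) :
    ∫ ω, Real.exp (l * ((∑ i, w i ω * Set.indicator (Set.Ioi (a i)) (fun _ => (1 : ℝ)) (w i ω)) -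
        (σ / Real.sqrt (2 * Real.pi)) * ∑ i, Real.exp (-(a i) ^ 2 / (2 * σ ^ 2))))
      ≤ Real.exp ((n : ℝ) * l ^ 2 * σ ^ 2 / 2) := by
  classical
  have hw : ∀ i, AEMeasurable (w i) ℙ := by
    intro i
    by_contra hna
    have h0 := Measure.map_of_not_aemeasurable hna
    rw [hdist i] at h0
    have h1 : (1:ℝ≥0∞) = 0 := by
      calc (1:ℝ≥0∞) = gaussianReal 0 (Real.toNNReal (σ^2)) Set.univ := measure_univ.symm
      _ = 0 := by rw [h0]; rfl
    simp at h1
  set W : Fin n → Ω → ℝ := fun i => (hw i).mk (w i) with hWdef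
  have hWmeas : ∀ i, Measurable (W i) := fun i => (hw i).measurable_mk
  have hWae : ∀ i, w i =ᵐ[ℙ] W i := fun i => (hw i).ae_eq_mk
  have hWdist : ∀ i, Measure.map (W i) ℙ = gaussianReal 0 (Real.toNNReal (σ^2)) :=
    fun i => by rw [← Measure.map_congr (hWae i), hdist i]
  have hWindep : iIndepFun W ℙ := iIndepFun_ae_congr hWae hindep
  set μf : Fin n → ℝ := fun i => σ / Real.sqrt (2*Real.pi) * rexp (-(a i)^2/(2*σ^2)) with hμf
  set g : Fin n → ℝ → ℝ :=
    fun i x => x * Set.indicator (Set.Ioi (a i)) (fun _ => (1:ℝ)) x - μf i with hg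
  have hgmeas : ∀ i, Measurable (g i) := by
    intro i
    exact (measurable_id.mul ((measurable_const).indicator measurableSet_Ioi)).sub
      measurable_const
  set X : Fin n → Ω → ℝ := fun i => g i ∘ W i with hX
  have hXindep : iIndepFun X ℙ := hWindep.comp g hgmeas
  have hXmeas : ∀ i, Measurable (X i) := fun i => (hgmeas i).comp (hWmeas i)
  have hconst : (σ / Real.sqrt (2*Real.pi)) * ∑ i, rexp (-(a i)^2/(2*σ^2)) = ∑ i, μf i := by
    rw [hμf, Finset.mul_sum]
  have heq : ∫ ω, Real.exp (l * ((∑ i, w i ω * Set.indicator (Set.Ioi (a i))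
        (fun _ => (1 : ℝ)) (w i ω)) -
        (σ / Real.sqrt (2 * Real.pi)) * ∑ i, Real.exp (-(a i) ^ 2 / (2 * σ ^ 2))))
      = mgf (∑ i, X i) ℙ l := by
    rw [mgf]
    apply integral_congr_ae
    have hall : ∀ᵐ ω ∂ℙ, ∀ i, w i ω = W i ω := by
      rw [ae_all_iff]; exact fun i => hWae i
    filter_upwards [hall] with ω hω
    congr 1
    rw [Finset.sum_apply]
    simp only [hX, hg, Function.comp_apply]
    rw [Finset.sum_sub_distrib, hconst]
    congr 2
    exact Finset.sum_congr rfl fun i _ => by rw [hω i]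
  rw [heq, hXindep.mgf_sum hXmeas Finset.univ]
  have hbound : ∀ i ∈ (Finset.univ : Finset (Fin n)), mgf (X i) ℙ l ≤ rexp (l^2*σ^2/2) := by
    intro i _
    have hmeas2 : Measurable (fun x : ℝ => rexp (l * g i x)) :=
      ((hgmeas i).const_mul l).exp
    have hrw : mgf (X i) ℙ l = ∫ x, rexp (l * g i x) ∂(Measure.map (W i) ℙ) := by
      rw [mgf]
      rw [integral_map (hWmeas i).aemeasurable hmeas2.aestronglyMeasurable]
      rfl
    rw [hrw, hWdist i]
    have := key_bound hσ hl (a i)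
    simpa only [hg, hμf] using this
  calc ∏ i, mgf (X i) ℙ l
      ≤ ∏ _i : Fin n, rexp (l^2*σ^2/2) :=
        Finset.prod_le_prod (fun i _ => mgf_nonneg) hbound
    _ = Real.exp ((n : ℝ) * l ^ 2 * σ ^ 2 / 2) := by
        rw [Finset.prod_const, Finset.card_univ, Fintype.card_fin, ← Real.exp_nat_mul]
        congr 1
        ring
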